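/- The f-vector of the Barycentric refinement G_1 of a finite abstract simplicial complex G is obtained from the f-vector of G by the matrix S with entries S_{ij} = i! · Stirling2(j, i) (Stirling numbers of the second kind): v_{i-1}(G_1) = Σ_j i! · Stirling2(j,i) · v_{j-1}(G); moreover the vector (1, -1, 1, -1, ...) is a left eigenvector of S with eigenvalue 1, so χ(G_1) = χ(G). -/

import Mathlib

open scoped Classical

/-- Stirling numbers of the second kind: `stirling2 n k` counts the partitions of an
`n`-element set into `k` nonempty blocks. -/
def stirling2 : ℕ → ℕ → ℕ
  | 0, 0 => 1
  | 0, _ + 1 => 0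
  | _ + 1, 0 => 0
  | n + 1, k + 1 => (k + 1) * stirling2 n (k + 1) + stirling2 n k

lemma stirling2_succ_succ (n k : ℕ) :
    stirling2 (n + 1) (k + 1) = (k + 1) * stirling2 n (k + 1) + stirling2 n k := rfl

lemma stirling2_zero_right (n : ℕ) (hn : n ≠ 0) : stirling2 n 0 = 0 := by
  cases n with
  | zero => simp at hn
  | succ n => rfl

lemma stirling2_one_right : ∀ n, 1 ≤ n → stirling2 n 1 = 1 := by
  intro n
  induction n with
  | zero => omega
  | succ n ih =>
    intro _
    rw [show (1:ℕ) = 0 + 1 from rfl, stirling2_succ_succ]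
    rcases Nat.eq_zero_or_pos n with rfl | hn
    · rfl
    · rw [stirling2_zero_right n (by omega)]
      simpa using ih hn

lemma stirling2_eq_zero_of_lt : ∀ n k, n < k → stirling2 n k = 0 := by
  intro n
  induction n with
  | zero => intro k hk; match k, hk with | (k+1), _ => rfl
  | succ n ih =>
    intro k hk
    match k, hk with
    | (k+1), hk =>
      rw [stirling2_succ_succ, ih (k+1) (by omega), ih k (by omega)]; ring

namespace Stmt19

def T (j i : ℕ) : ℕ := Nat.factorial i * stirling2 j i

lemma T_zero_left (i : ℕ) : T 0 i = if i = 0 then 1 else 0 := by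
  cases i with
  | zero => rfl
  | succ i => simp [T, stirling2_eq_zero_of_lt 0 (i+1) (by omega)]

lemma T_zero_right (j : ℕ) (hj : j ≠ 0) : T j 0 = 0 := by
  simp [T, stirling2_zero_right j hj]

lemma T_one_right (j : ℕ) (hj : 1 ≤ j) : T j 1 = 1 := by
  simp [T, stirling2_one_right j hj, Nat.factorial]

lemma T_succ_succ (j i : ℕ) :
    T (j + 1) (i + 1) = (i + 1) * T j (i + 1) + (i + 1) * T j i := by
  unfold T
  rw [stirling2_succ_succ, Nat.factorial_succ]
  ring

def Gsum (j i : ℕ) : ℕ := ∑ m ∈ Finset.range j, j.choose m * T m i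

lemma Gsum_eq : ∀ j, 1 ≤ j → ∀ i, Gsum j i = if i = 0 then 1 else T j (i + 1) := by
  intro j
  induction j with
  | zero => omega
  | succ j ih =>
    intro _ i
    rcases Nat.eq_zero_or_pos j with rfl | hj
    · have h1 : Gsum 1 i = T 0 i := by simp [Gsum]
      rw [h1, T_zero_left]
      cases i with
      | zero => rfl
      | succ i =>
        simp [T, stirling2_eq_zero_of_lt 1 (i+2) (by omega)]
    · -- key decomposition
      have key : Gsum (j+1) i = (∑ m ∈ Finset.range j, j.choose m * T (m+1) i)
          + Gsum j i + T j i := by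
        have h0 : Gsum (j+1) i
            = (∑ m ∈ Finset.range j, (j+1).choose (m+1) * T (m+1) i) + (j+1).choose 0 * T 0 i := by
          unfold Gsum
          rw [Finset.sum_range_succ']
        have h1 : ∀ m, (j+1).choose (m+1) = j.choose m + j.choose (m+1) :=
          fun m => Nat.choose_succ_succ j m
        have h2 : (∑ m ∈ Finset.range j, (j+1).choose (m+1) * T (m+1) i)
            = (∑ m ∈ Finset.range j, j.choose m * T (m+1) i)
              + ∑ m ∈ Finset.range j, j.choose (m+1) * T (m+1) i := by
          rw [← Finset.sum_add_distrib]
          refine Finset.sum_congr rfl fun m _ => ?_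
          rw [h1 m]; ring
        have h3 : (∑ m ∈ Finset.range j, j.choose (m+1) * T (m+1) i) + j.choose 0 * T 0 i
            = Gsum j i + T j i := by
          have : (∑ m ∈ Finset.range j, j.choose (m+1) * T (m+1) i) + j.choose 0 * T 0 i
              = ∑ m ∈ Finset.range (j+1), j.choose m * T m i := by
            rw [Finset.sum_range_succ']
          rw [this, Finset.sum_range_succ]
          simp [Gsum]
        have hch : (j+1).choose 0 * T 0 i = j.choose 0 * T 0 i := by simp
        omega
      cases i with
      | zero =>
        have hA : (∑ m ∈ Finset.range j, j.choose m * T (m+1) 0) = 0 := by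
          apply Finset.sum_eq_zero
          intro m _
          rw [T_zero_right (m+1) (by omega)]; ring
        rw [key, hA, ih hj 0, T_zero_right j (by omega)]
        rfl
      | succ i' =>
        have hsplit : ∀ m, T (m+1) (i'+1) = (i'+1) * T m (i'+1) + (i'+1) * T m i' :=
          fun m => T_succ_succ m i'
        have hA : (∑ m ∈ Finset.range j, j.choose m * T (m+1) (i'+1))
            = (i'+1) * Gsum j (i'+1) + (i'+1) * Gsum j i' := by
          unfold Gsum
          rw [Finset.mul_sum, Finset.mul_sum, ← Finset.sum_add_distrib]
          refine Finset.sum_congr rfl fun m _ => ?_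
          rw [hsplit m]; ring
        have hGi' : (i'+1) * Gsum j i' = (i'+1) * T j (i'+1) := by
          rw [ih hj i']
          cases i' with
          | zero => rw [T_one_right j hj]; simp
          | succ k => simp
        rw [key, hA, hGi', ih hj (i'+1)]
        simp only [if_neg (Nat.succ_ne_zero i')]
        rw [T_succ_succ j (i'+1)]
        ring

section Chains

variable {V : Type*} [DecidableEq V]

def topChains (x : Finset V) : Finset (Finset (Finset V)) :=
  x.powerset.powerset.filter fun s =>
    x ∈ s ∧ (∀ y ∈ s, y ≠ ∅) ∧ ∀ y ∈ s, ∀ z ∈ s, y ⊆ z ∨ z ⊆ y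

lemma mem_topChains {x : Finset V} {s : Finset (Finset V)} :
    s ∈ topChains x ↔ (∀ y ∈ s, y ⊆ x) ∧ x ∈ s ∧ (∀ y ∈ s, y ≠ ∅) ∧
      ∀ y ∈ s, ∀ z ∈ s, y ⊆ z ∨ z ⊆ y := by
  unfold topChains
  simp only [Finset.mem_filter, Finset.mem_powerset]
  constructor
  · rintro ⟨h1, h2⟩
    exact ⟨fun y hy => Finset.mem_powerset.1 (h1 hy), h2⟩
  · rintro ⟨h1, h2⟩
    exact ⟨fun {y} hy => Finset.mem_powerset.2 (h1 y hy), h2⟩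

def chainsTop (x : Finset V) (i : ℕ) : Finset (Finset (Finset V)) :=
  (topChains x).filter fun s => s.card = i

lemma mem_chainsTop {x : Finset V} {s : Finset (Finset V)} {i : ℕ} :
    s ∈ chainsTop x i ↔ s ∈ topChains x ∧ s.card = i := Finset.mem_filter

lemma topChains_disjoint {x x' : Finset V} (h : x ≠ x') :
    Disjoint (topChains x) (topChains x') := by
  rw [Finset.disjoint_left]
  intro s hs hs'
  rw [mem_topChains] at hs hs'
  exact h (Finset.Subset.antisymm (hs'.1 x hs.2.1) (hs.1 x' hs'.2.1))

lemma chainsTop_disjoint {x x' : Finset V} (h : x ≠ x') (i : ℕ) :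
    Disjoint (chainsTop x i) (chainsTop x' i) :=
  Finset.disjoint_of_subset_left (Finset.filter_subset _ _)
    (Finset.disjoint_of_subset_right (Finset.filter_subset _ _) (topChains_disjoint h))

lemma sup_mem_chain : ∀ s : Finset (Finset V), s.Nonempty →
    (∀ y ∈ s, ∀ z ∈ s, y ⊆ z ∨ z ⊆ y) → s.sup id ∈ s := by
  intro s
  induction s using Finset.induction_on with
  | empty => intro h; simp at h
  | @insert a t ha ih =>
    intro _ hc
    rcases t.eq_empty_or_nonempty with rfl | ht
    · simp
    · have hmem : t.sup id ∈ t := ih ht fun y hy z hz =>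
        hc y (Finset.mem_insert_of_mem hy) z (Finset.mem_insert_of_mem hz)
      rw [Finset.sup_insert]
      rcases hc a (Finset.mem_insert_self a t) (t.sup id) (Finset.mem_insert_of_mem hmem)
        with hle | hle
      · have : (id a : Finset V) ⊔ t.sup id = t.sup id := sup_eq_right.2 hle
        rw [this]
        exact Finset.mem_insert_of_mem hmem
      · have : (id a : Finset V) ⊔ t.sup id = a := sup_eq_left.2 hle
        rw [this]
        exact Finset.mem_insert_self a t

lemma topChains_card_mem {x : Finset V} {s : Finset (Finset V)} (hs : s ∈ topChains x) :
    s.card ∈ Finset.Icc 1 x.card := by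
  rw [mem_topChains] at hs
  obtain ⟨hsub, hxs, hne, hchain⟩ := hs
  rw [Finset.mem_Icc]
  constructor
  · exact Finset.card_pos.2 ⟨x, hxs⟩
  · have hinj : Set.InjOn Finset.card (s : Set (Finset V)) := by
      intro y hy z hz hyz
      rcases hchain y hy z hz with h | h
      · exact Finset.eq_of_subset_of_card_le h (le_of_eq hyz.symm)
      · exact (Finset.eq_of_subset_of_card_le h (le_of_eq hyz)).symm
    have hmaps : ∀ y ∈ s, y.card ∈ Finset.Icc 1 x.card := by
      intro y hy
      rw [Finset.mem_Icc]
      exact ⟨Finset.card_pos.2 (Finset.nonempty_iff_ne_empty.2 (hne y hy)),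
        Finset.card_le_card (hsub y hy)⟩
    calc s.card ≤ (Finset.Icc 1 x.card).card := Finset.card_le_card_of_injOn _ hmaps hinj
    _ = x.card := by rw [Nat.card_Icc]; omega

lemma chainsTop_zero (x : Finset V) : chainsTop x 0 = ∅ := by
  ext s
  simp only [mem_chainsTop, Finset.notMem_empty, iff_false]
  rintro ⟨hs, hcard⟩
  have := topChains_card_mem hs
  rw [hcard] at this
  simp at this

lemma chainsTop_one (x : Finset V) (hx : x ≠ ∅) : chainsTop x 1 = {{x}} := by
  ext s
  simp only [mem_chainsTop, Finset.mem_singleton]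
  constructor
  · rintro ⟨hs, hcard⟩
    rw [mem_topChains] at hs
    obtain ⟨s', hs'⟩ := Finset.card_eq_one.1 hcard
    subst hs'
    rw [Finset.mem_singleton] at hs
    rw [hs.2.1]
  · rintro rfl
    refine ⟨mem_topChains.2 ⟨?_, ?_, ?_, ?_⟩, ?_⟩ <;>
      simp [hx, Finset.Subset.refl]

lemma chainsTop_decomp (x : Finset V) (i : ℕ) (hi : 1 ≤ i) :
    chainsTop x (i + 1) = (x.powerset.filter fun y => y ≠ ∅ ∧ y ≠ x).biUnion
      fun y => (chainsTop y i).image (insert x) := by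
  ext s
  simp only [Finset.mem_biUnion, Finset.mem_image, Finset.mem_filter, Finset.mem_powerset]
  constructor
  · intro hs
    rw [mem_chainsTop, mem_topChains] at hs
    obtain ⟨⟨hsub, hxs, hne, hchain⟩, hcard⟩ := hs
    set t := s.erase x with ht
    have hxt : x ∉ t := Finset.notMem_erase x s
    have htcard : t.card = i := by
      rw [ht, Finset.card_erase_of_mem hxs, hcard]
      omega
    have htne : t.Nonempty := Finset.card_pos.1 (by omega)
    have htsub : ∀ z ∈ t, z ∈ s := fun z hz => Finset.mem_of_mem_erase hz
    have htchain : ∀ y ∈ t, ∀ z ∈ t, y ⊆ z ∨ z ⊆ y :=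
      fun y hy z hz => hchain y (htsub y hy) z (htsub z hz)
    set y := t.sup id with hy
    have hyt : y ∈ t := sup_mem_chain t htne htchain
    have hynex : y ≠ x := fun h => hxt (h ▸ hyt)
    refine ⟨y, ⟨⟨hsub y (htsub y hyt), hne y (htsub y hyt), hynex⟩, t, ?_, ?_⟩⟩
    · rw [mem_chainsTop, mem_topChains]
      exact ⟨⟨fun z hz => Finset.le_sup (f := id) hz, hyt,
        fun z hz => hne z (htsub z hz), htchain⟩, htcard⟩
    · rw [ht, Finset.insert_erase hxs]
  · rintro ⟨y, ⟨⟨hyx, hyne, hynex⟩, t, hts, rfl⟩⟩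
    rw [mem_chainsTop, mem_topChains] at hts ⊢
    obtain ⟨⟨hsub, hyt, hne, hchain⟩, hcard⟩ := hts
    have hxt : x ∉ t := by
      intro hx
      exact hynex (Finset.Subset.antisymm hyx (hsub x hx))
    refine ⟨⟨?_, Finset.mem_insert_self x t, ?_, ?_⟩, ?_⟩
    · intro z hz
      rcases Finset.mem_insert.1 hz with rfl | hz
      · exact Finset.Subset.refl _
      · exact (hsub z hz).trans hyx
    · intro z hz
      rcases Finset.mem_insert.1 hz with rfl | hz
      · intro h; exact hyne (Finset.subset_empty.1 (h ▸ hyx))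
      · exact hne z hz
    · intro a ha b hb
      rcases Finset.mem_insert.1 ha with rfl | ha'
      · rcases Finset.mem_insert.1 hb with rfl | hb'
        · exact Or.inl (Finset.Subset.refl _)
        · exact Or.inr ((hsub b hb').trans hyx)
      · rcases Finset.mem_insert.1 hb with rfl | hb'
        · exact Or.inl ((hsub a ha').trans hyx)
        · exact hchain a ha' b hb' 
    · rw [Finset.card_insert_of_notMem hxt, hcard]

lemma chainsTop_card_succ (x : Finset V) (i : ℕ) (hi : 1 ≤ i) :
    (chainsTop x (i + 1)).card
      = ∑ y ∈ x.powerset.filter fun y => y ≠ ∅ ∧ y ≠ x, (chainsTop y i).card := by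
  rw [chainsTop_decomp x i hi, Finset.card_biUnion]
  · refine Finset.sum_congr rfl fun y hy => ?_
    simp only [Finset.mem_filter, Finset.mem_powerset] at hy
    obtain ⟨hyx, hyne, hynex⟩ := hy
    apply Finset.card_image_of_injOn
    intro t ht t' ht' heq
    have hxt : ∀ u : Finset (Finset V), u ∈ chainsTop y i → x ∉ u := by
      intro u hu hxu
      rw [mem_chainsTop, mem_topChains] at hu
      exact hynex (Finset.Subset.antisymm hyx (hu.1.1 x hxu))
    have h1 : t = (insert x t).erase x := by
      rw [Finset.erase_insert (hxt t ht)]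
    have h2 : t' = (insert x t').erase x := by
      rw [Finset.erase_insert (hxt t' ht')]
    rw [h1, h2, heq]
  · intro y hy y' hy' hne'
    rw [Function.onFun, Finset.disjoint_left]
    intro s hs hs'
    simp only [Finset.mem_image] at hs hs'
    obtain ⟨t, ht, hst⟩ := hs
    obtain ⟨t', ht', hst'⟩ := hs'
    simp only [Finset.mem_coe, Finset.mem_filter, Finset.mem_powerset] at hy hy'
    have hxt : ∀ (z : Finset V) (u : Finset (Finset V)),
        z ⊆ x → z ≠ x → u ∈ chainsTop z i → x ∉ u := by
      intro z u hzx hznex hu hxu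
      rw [mem_chainsTop, mem_topChains] at hu
      exact hznex (Finset.Subset.antisymm hzx (hu.1.1 x hxu))
    have htt' : t = t' := by
      have e1 : t = s.erase x := by
        rw [← hst, Finset.erase_insert (hxt y t hy.1 hy.2.2 ht)]
      have e2 : t' = s.erase x := by
        rw [← hst', Finset.erase_insert (hxt y' t' hy'.1 hy'.2.2 ht')]
      rw [e1, e2]
    subst htt'
    exact Finset.disjoint_left.1 (chainsTop_disjoint hne' i) ht ht'

lemma chainsTop_card : ∀ (n : ℕ) (x : Finset V), x.card = n → x ≠ ∅ → ∀ i,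
    (chainsTop x i).card = T n i := by
  intro n
  induction n using Nat.strong_induction_on with
  | _ n ih =>
    intro x hxc hx i
    have hn : 1 ≤ n := by
      rw [← hxc]
      exact Finset.card_pos.2 (Finset.nonempty_iff_ne_empty.2 hx)
    match i with
    | 0 =>
      rw [chainsTop_zero, T_zero_right n (by omega)]
      rfl
    | 1 =>
      rw [chainsTop_one x hx, T_one_right n hn]
      rfl
    | (i+2) =>
      rw [chainsTop_card_succ x (i+1) (by omega)]
      have hstep : ∀ y ∈ x.powerset.filter fun y => y ≠ ∅ ∧ y ≠ x,
          (chainsTop y (i+1)).card = T y.card (i+1) := by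
        intro y hy
        simp only [Finset.mem_filter, Finset.mem_powerset] at hy
        obtain ⟨hyx, hyne, hynex⟩ := hy
        have hcardlt : y.card < n := by
          rw [← hxc]
          exact Finset.card_lt_card (Finset.ssubset_iff_subset_ne.2 ⟨hyx, hynex⟩)
        exact ih y.card hcardlt y rfl hyne (i+1)
      rw [Finset.sum_congr rfl hstep]
      -- now compute the sum
      have hsum : ∑ y ∈ x.powerset.filter (fun y => y ≠ ∅ ∧ y ≠ x), T y.card (i+1)
          = Gsum n (i+1) := by
        have hfull : ∑ y ∈ x.powerset, T y.card (i+1)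
            = Gsum n (i+1) + T n (i+1) := by
          rw [Finset.sum_powerset_apply_card (fun m => T m (i+1))]
          rw [hxc, Finset.sum_range_succ]
          simp only [smul_eq_mul, Nat.choose_self, one_mul]
          rfl
        have hsplit : x.powerset = insert ∅ (insert x
            (x.powerset.filter fun y => y ≠ ∅ ∧ y ≠ x)) := by
          ext y
          simp only [Finset.mem_insert, Finset.mem_filter, Finset.mem_powerset]
          constructor
          · intro hy
            by_cases h1 : y = ∅
            · exact Or.inl h1
            · by_cases h2 : y = x
              · exact Or.inr (Or.inl h2)
              · exact Or.inr (Or.inr ⟨hy, h1, h2⟩)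
          · rintro (rfl | rfl | ⟨h, _⟩)
            · exact Finset.empty_subset _
            · exact Finset.Subset.refl _
            · exact h
        have hnotmem1 : x ∉ (x.powerset.filter fun y => y ≠ ∅ ∧ y ≠ x) := by
          simp
        have hnotmem2 : ∅ ∉ insert x (x.powerset.filter fun y => y ≠ ∅ ∧ y ≠ x) := by
          intro h
          rcases Finset.mem_insert.1 h with h | h
          · exact hx h.symm
          · simp at h
        rw [hsplit, Finset.sum_insert hnotmem2, Finset.sum_insert hnotmem1] at hfull
        simp only [Finset.card_empty] at hfull
        rw [T_zero_left, if_neg (by omega : ¬ i + 1 = 0), hxc] at hfull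
        omega
      rw [hsum, Gsum_eq n hn (i+1), if_neg (by omega : ¬ i + 1 = 0)]

end Chains

lemma sum_Icc_one {M : Type*} [AddCommMonoid M] (n : ℕ) (f : ℕ → M) :
    ∑ i ∈ Finset.Icc 1 n, f i = ∑ i ∈ Finset.range n, f (i + 1) := by
  induction n with
  | zero => simp
  | succ n ih =>
    rw [Finset.sum_Icc_succ_top (by omega : 1 ≤ n + 1), ih, Finset.sum_range_succ]

lemma alt_sum : ∀ j, 1 ≤ j →
    ∑ i ∈ Finset.range j, (-1:ℤ)^i * (Nat.factorial (i+1) : ℤ) * (stirling2 j (i+1) : ℤ)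
      = (-1)^(j+1) := by
  intro j
  induction j with
  | zero => omega
  | succ j ih =>
    intro _
    rcases Nat.eq_zero_or_pos j with rfl | hj
    · norm_num
      rfl
    · have hS : ∀ i : ℕ, (stirling2 (j+1) (i+1) : ℤ)
          = (i+1) * stirling2 j (i+1) + stirling2 j i := by
        intro i; rw [stirling2_succ_succ]; push_cast; ring
      have hsplit : ∑ i ∈ Finset.range (j+1),
            (-1:ℤ)^i * (Nat.factorial (i+1) : ℤ) * (stirling2 (j+1) (i+1) : ℤ)
          = (∑ i ∈ Finset.range (j+1),
              (-1:ℤ)^i * (Nat.factorial (i+1) : ℤ) * ((i+1) * (stirling2 j (i+1) : ℤ)))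
            + ∑ i ∈ Finset.range (j+1),
              (-1:ℤ)^i * (Nat.factorial (i+1) : ℤ) * (stirling2 j i : ℤ) := by
        rw [← Finset.sum_add_distrib]
        refine Finset.sum_congr rfl fun i _ => ?_
        rw [hS i]; ring
      have hP : ∑ i ∈ Finset.range (j+1),
            (-1:ℤ)^i * (Nat.factorial (i+1) : ℤ) * ((i+1) * (stirling2 j (i+1) : ℤ))
          = ∑ i ∈ Finset.range j,
            (-1:ℤ)^i * (Nat.factorial (i+1) : ℤ) * ((i+1) * (stirling2 j (i+1) : ℤ)) := by
        rw [Finset.sum_range_succ, stirling2_eq_zero_of_lt j (j+1) (by omega)]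
        norm_num
      have hQ : ∑ i ∈ Finset.range (j+1),
            (-1:ℤ)^i * (Nat.factorial (i+1) : ℤ) * (stirling2 j i : ℤ)
          = ∑ i ∈ Finset.range j,
            (-1:ℤ)^(i+1) * (Nat.factorial (i+2) : ℤ) * (stirling2 j (i+1) : ℤ) := by
        rw [Finset.sum_range_succ']
        rw [stirling2_zero_right j (by omega)]
        norm_num
      rw [hsplit, hP, hQ, ← Finset.sum_add_distrib]
      have hterm : ∀ i : ℕ,
          (-1:ℤ)^i * (Nat.factorial (i+1) : ℤ) * ((i+1) * (stirling2 j (i+1) : ℤ))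
            + (-1:ℤ)^(i+1) * (Nat.factorial (i+2) : ℤ) * (stirling2 j (i+1) : ℤ)
          = -((-1:ℤ)^i * (Nat.factorial (i+1) : ℤ) * (stirling2 j (i+1) : ℤ)) := by
        intro i
        have hfact : (Nat.factorial (i+2) : ℤ) = (i+2) * (Nat.factorial (i+1) : ℤ) := by
          rw [Nat.factorial_succ]; push_cast; ring
        rw [hfact, pow_succ]
        ring
      rw [Finset.sum_congr rfl fun i _ => hterm i]
      have hneg : ∑ i ∈ Finset.range j,
          -((-1:ℤ)^i * (Nat.factorial (i+1) : ℤ) * (stirling2 j (i+1) : ℤ))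
          = -∑ i ∈ Finset.range j,
            (-1:ℤ)^i * (Nat.factorial (i+1) : ℤ) * (stirling2 j (i+1) : ℤ) := by
        rw [Finset.sum_neg_distrib]
      rw [hneg, ih hj, pow_succ]
      ring

lemma part2 (j : ℕ) (hj : 1 ≤ j) :
    ∑ i ∈ Finset.Icc 1 j, (-1 : ℤ) ^ (i + 1) * (Nat.factorial i : ℤ) * (stirling2 j i : ℤ)
      = (-1 : ℤ) ^ (j + 1) := by
  rw [sum_Icc_one j (fun i => (-1 : ℤ) ^ (i + 1) * (Nat.factorial i : ℤ) * (stirling2 j i : ℤ))]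
  rw [← alt_sum j hj]
  refine Finset.sum_congr rfl fun i _ => ?_
  have : (-1:ℤ)^(i+1+1) = (-1:ℤ)^i * ((-1)*(-1)) := by rw [pow_succ, pow_succ]; ring
  rw [this]
  ring

section Main

variable {V : Type*} [DecidableEq V]

lemma sum_cliques {M : Type*} [AddCommMonoid M]
    (G : Finset (Finset V))
    (hne : ∀ x ∈ G, x ≠ ∅)
    (hdown : ∀ x ∈ G, ∀ y, y ⊆ x → y ≠ ∅ → y ∈ G)
    (G1 : SimpleGraph {x // x ∈ G})
    (hG1 : ∀ x y : {x // x ∈ G}, G1.Adj x y ↔ x.1 ⊂ y.1 ∨ y.1 ⊂ x.1)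
    (F : ℕ → M) :
    ∑ s ∈ Finset.univ.filter (fun s : Finset {x // x ∈ G} =>
        s.Nonempty ∧ G1.IsClique (s : Set {x // x ∈ G})), F s.card
      = ∑ x ∈ G, ∑ S ∈ topChains x, F S.card := by
  have hdisj : (G : Set (Finset V)).PairwiseDisjoint topChains :=
    fun x _ y _ hxy => topChains_disjoint hxy
  rw [← Finset.sum_biUnion hdisj]
  have hmemG : ∀ x ∈ G, ∀ S ∈ topChains x, ∀ y ∈ S, y ∈ G := by
    intro x hxG S hS y hy
    rw [mem_topChains] at hS
    exact hdown x hxG y (hS.1 y hy) (hS.2.2.1 y hy)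
  refine Finset.sum_nbij' (fun s => s.image Subtype.val)
    (fun S => S.subtype (· ∈ G)) ?_ ?_ ?_ ?_ ?_
  · -- forward membership
    intro s hs
    simp only [Finset.mem_filter, Finset.mem_univ, true_and] at hs
    obtain ⟨hsne, hclique⟩ := hs
    have hSchain : ∀ y ∈ s.image Subtype.val, ∀ z ∈ s.image Subtype.val,
        y ⊆ z ∨ z ⊆ y := by
      intro y hy z hz
      simp only [Finset.mem_image] at hy hz
      obtain ⟨a, ha, rfl⟩ := hy
      obtain ⟨b, hb, rfl⟩ := hz
      by_cases hab : a = b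
      · subst hab; exact Or.inl (Finset.Subset.refl _)
      · rcases (hG1 a b).1 (hclique (Finset.mem_coe.2 ha) (Finset.mem_coe.2 hb) hab)
          with h | h
        · exact Or.inl h.subset
        · exact Or.inr h.subset
    have hSne : (s.image Subtype.val).Nonempty := hsne.image _
    have htop : (s.image Subtype.val).sup id ∈ s.image Subtype.val :=
      sup_mem_chain _ hSne hSchain
    have htopG : (s.image Subtype.val).sup id ∈ G := by
      simp only [Finset.mem_image] at htop
      obtain ⟨a, _, ha⟩ := htop
      exact ha ▸ a.2
    rw [Finset.mem_biUnion]
    refine ⟨(s.image Subtype.val).sup id, htopG, ?_⟩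
    rw [mem_topChains]
    refine ⟨fun y hy => Finset.le_sup (f := id) hy, htop, ?_, hSchain⟩
    intro y hy
    simp only [Finset.mem_image] at hy
    obtain ⟨a, _, rfl⟩ := hy
    exact hne a.1 a.2
  · -- backward membership
    intro S hS
    rw [Finset.mem_biUnion] at hS
    obtain ⟨x, hxG, hSx⟩ := hS
    have hmem : ∀ y ∈ S, y ∈ G := hmemG x hxG S hSx
    rw [mem_topChains] at hSx
    obtain ⟨hsub, hxS, hSne, hchain⟩ := hSx
    simp only [Finset.mem_filter, Finset.mem_univ, true_and]
    constructor
    · exact ⟨⟨x, hmem x hxS⟩, Finset.mem_subtype.2 hxS⟩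
    · intro a ha b hb hab
      rw [Finset.mem_coe, Finset.mem_subtype] at ha hb
      have hne' : a.1 ≠ b.1 := fun h' => hab (Subtype.ext h')
      rw [hG1]
      rcases hchain a.1 ha b.1 hb with h | h
      · exact Or.inl (Finset.ssubset_iff_subset_ne.2 ⟨h, hne'⟩)
      · exact Or.inr (Finset.ssubset_iff_subset_ne.2 ⟨h, hne'.symm⟩)
  · -- left inverse
    intro s _
    ext a
    simp only [Finset.mem_subtype, Finset.mem_image]
    constructor
    · rintro ⟨b, hb, hba⟩
      rwa [← Subtype.ext hba]
    · intro ha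
      exact ⟨a, ha, rfl⟩
  · -- right inverse
    intro S hS
    rw [Finset.mem_biUnion] at hS
    obtain ⟨x, hxG, hSx⟩ := hS
    have hmem : ∀ y ∈ S, y ∈ G := hmemG x hxG S hSx
    ext y
    simp only [Finset.mem_image, Finset.mem_subtype]
    constructor
    · rintro ⟨a, ha, rfl⟩
      exact ha
    · intro hy
      exact ⟨⟨y, hmem y hy⟩, hy, rfl⟩
  · -- function compatibility
    intro s _
    rw [Finset.card_image_of_injective s Subtype.val_injective]

lemma part3inner (j : ℕ) (hj : 1 ≤ j) :
    ∑ i ∈ Finset.Icc 1 j, (-1 : ℤ) ^ (i - 1) * (T j i : ℤ) = (-1 : ℤ) ^ (j - 1) := by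
  have h1 : ∀ i, 1 ≤ i → (-1 : ℤ) ^ (i - 1) = (-1 : ℤ) ^ (i + 1) := by
    intro i hi
    obtain ⟨k, rfl⟩ := Nat.exists_eq_add_of_le hi
    have : 1 + k + 1 = (1 + k - 1) + 2 := by omega
    rw [this, pow_add]
    norm_num
  have h2 : ∑ i ∈ Finset.Icc 1 j, (-1 : ℤ) ^ (i - 1) * (T j i : ℤ)
      = ∑ i ∈ Finset.Icc 1 j,
        (-1 : ℤ) ^ (i + 1) * (Nat.factorial i : ℤ) * (stirling2 j i : ℤ) := by
    refine Finset.sum_congr rfl fun i hi => ?_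
    rw [Finset.mem_Icc] at hi
    rw [h1 i hi.1]
    unfold T
    push_cast
    ring
  rw [h2, part2 j hj, h1 j hj]

end Main

end Stmt19

/-- The f-vector of the Barycentric refinement `G_1` of a finite abstract
simplicial complex `G` (whose faces are the chains of faces of `G`, i.e. the cliques of
the inclusion graph) is obtained from the f-vector of `G` by
`v_{i-1}(G_1) = Σ_j i!·Stirling2(j,i)·v_{j-1}(G)`; moreover `(1,-1,1,-1,...)` is a left
eigenvector with eigenvalue `1`, i.e. `Σ_i (-1)^{i+1} i!·Stirling2(j,i) = (-1)^{j+1}`,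
so that `χ(G_1) = χ(G)`. -/
theorem stmt19 {V : Type*} [Fintype V] [DecidableEq V] (G : Finset (Finset V))
    (hne : ∀ x ∈ G, x ≠ ∅)
    (hdown : ∀ x ∈ G, ∀ y, y ⊆ x → y ≠ ∅ → y ∈ G)
    (G1 : SimpleGraph {x // x ∈ G})
    (hG1 : ∀ x y : {x // x ∈ G}, G1.Adj x y ↔ x.1 ⊂ y.1 ∨ y.1 ⊂ x.1)
    (v w : ℕ → ℕ)
    (hv : ∀ j, v j = (G.filter fun x => x.card = j).card)
    (hw : ∀ i, w i = (Finset.univ.filter fun s : Finset {x // x ∈ G} =>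
        s.card = i ∧ G1.IsClique (s : Set {x // x ∈ G})).card) :
    (∀ i, 1 ≤ i →
      w i = ∑ j ∈ Finset.Icc 1 (Fintype.card V), Nat.factorial i * stirling2 j i * v j) ∧
    (∀ j, 1 ≤ j →
      ∑ i ∈ Finset.Icc 1 j, (-1 : ℤ) ^ (i + 1) * (Nat.factorial i : ℤ) * (stirling2 j i : ℤ)
        = (-1 : ℤ) ^ (j + 1)) ∧
    (∑ s : Finset {x // x ∈ G},
        if s.Nonempty ∧ G1.IsClique (s : Set {x // x ∈ G}) then (-1 : ℤ) ^ (s.card - 1) else 0)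
      = ∑ x ∈ G, (-1 : ℤ) ^ (x.card - 1) := by
  classical
  open Stmt19 in
  refine ⟨?_, fun j hj => Stmt19.part2 j hj, ?_⟩
  · -- part 1
    intro i hi
    rw [hw i]
    have hF := Stmt19.sum_cliques G hne hdown G1 hG1 (fun c => if c = i then (1:ℕ) else 0)
    have hL : ∑ s ∈ Finset.univ.filter (fun s : Finset {x // x ∈ G} =>
          s.Nonempty ∧ G1.IsClique (s : Set {x // x ∈ G})),
          (if s.card = i then (1:ℕ) else 0)
        = (Finset.univ.filter fun s : Finset {x // x ∈ G} =>
          s.card = i ∧ G1.IsClique (s : Set {x // x ∈ G})).card := by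
      simp only [Finset.sum_boole, Nat.cast_id]
      congr 1
      rw [Finset.filter_filter]
      apply Finset.filter_congr
      intro s _
      constructor
      · rintro ⟨⟨_, hc⟩, hcard⟩; exact ⟨hcard, hc⟩
      · rintro ⟨hcard, hc⟩
        exact ⟨⟨Finset.card_pos.1 (by omega), hc⟩, hcard⟩
    have hR : ∀ x ∈ G, (∑ S ∈ Stmt19.topChains x, if S.card = i then (1:ℕ) else 0)
        = Stmt19.T x.card i := by
      intro x hx
      have : (∑ S ∈ Stmt19.topChains x, if S.card = i then (1:ℕ) else 0)
          = ((Stmt19.topChains x).filter fun S => S.card = i).card := by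
        simp only [Finset.sum_boole, Nat.cast_id]
      rw [this]
      rw [show ((Stmt19.topChains x).filter fun S => S.card = i)
        = Stmt19.chainsTop x i from rfl]
      exact Stmt19.chainsTop_card x.card x rfl (hne x hx) i
    rw [← hL, hF, Finset.sum_congr rfl hR]
    have hmaps : ∀ x ∈ G, x.card ∈ Finset.Icc 1 (Fintype.card V) := by
      intro x hx
      rw [Finset.mem_Icc]
      refine ⟨Finset.card_pos.2 (Finset.nonempty_iff_ne_empty.2 (hne x hx)), ?_⟩
      calc x.card ≤ Finset.univ.card := Finset.card_le_univ x
      _ = Fintype.card V := Finset.card_univ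
    rw [← Finset.sum_fiberwise_of_maps_to hmaps (fun x => Stmt19.T x.card i)]
    refine Finset.sum_congr rfl fun j hj => ?_
    rw [hv j]
    rw [Finset.sum_congr rfl (fun x hx => by
      rw [(Finset.mem_filter.1 hx).2] : ∀ x ∈ G.filter (fun x => x.card = j),
        Stmt19.T x.card i = Stmt19.T j i)]
    rw [Finset.sum_const, smul_eq_mul]
    unfold Stmt19.T
    ring
  · -- part 3
    rw [show (∑ s : Finset {x // x ∈ G},
        if s.Nonempty ∧ G1.IsClique (s : Set {x // x ∈ G}) then (-1 : ℤ) ^ (s.card - 1) else 0)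
      = ∑ s ∈ Finset.univ.filter (fun s : Finset {x // x ∈ G} =>
          s.Nonempty ∧ G1.IsClique (s : Set {x // x ∈ G})), (-1 : ℤ) ^ (s.card - 1)
      from (Finset.sum_filter _ _).symm]
    rw [Stmt19.sum_cliques G hne hdown G1 hG1 (fun c => (-1:ℤ)^(c-1))]
    refine Finset.sum_congr rfl fun x hx => ?_
    have hxcard : 1 ≤ x.card :=
      Finset.card_pos.2 (Finset.nonempty_iff_ne_empty.2 (hne x hx))
    rw [← Finset.sum_fiberwise_of_maps_to (fun S hS => Stmt19.topChains_card_mem hS)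
      (fun S => (-1:ℤ)^(S.card-1))]
    have hinner : ∀ i ∈ Finset.Icc 1 x.card,
        (∑ S ∈ (Stmt19.topChains x).filter (fun S => S.card = i), (-1:ℤ)^(S.card-1))
        = (-1:ℤ)^(i-1) * (Stmt19.T x.card i : ℤ) := by
      intro i hi
      rw [Finset.sum_congr rfl (fun S hS => by
        rw [(Finset.mem_filter.1 hS).2] : ∀ S ∈ (Stmt19.topChains x).filter (fun S => S.card = i),
          (-1:ℤ)^(S.card-1) = (-1:ℤ)^(i-1))]
      rw [Finset.sum_const]
      rw [show ((Stmt19.topChains x).filter fun S => S.card = i)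
        = Stmt19.chainsTop x i from rfl]
      rw [Stmt19.chainsTop_card x.card x rfl (hne x hx) i, nsmul_eq_mul]
      ring
    rw [Finset.sum_congr rfl hinner, Stmt19.part3inner x.card hxcard]
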